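/- Define q₀ = 1 and q_{k+1} = 3^{q_k^4}. For signs ε_ℓ ∈ {−1,+1} and fixed integers n ≥ 1, 1 ≤ i ≤ n, set x = ∑_{ℓ=1}^∞ ε_ℓ (4(ℓ−1))^{n−i} / q_ℓ. Then x converges, and for all sufficiently large k, letting p_k = q_k ∑_{ℓ=1}^k ε_ℓ (4(ℓ−1))^{n−i}/q_ℓ ∈ ℤ, one has (4k)^{n−i} q_k / (2 q_{k+1}) ≤ |q_k x − p_k| ≤ 2 (4k)^{n−i} q_k / q_{k+1}. -/

import Mathlib

open Finset

private lemma aux_three_mul_le (x : ℕ) : 3 * x ≤ 3 ^ (x ^ 4) := by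
  match x with
  | 0 => simp
  | 1 => norm_num
  | (y+2) =>
    have h0 : (y+2) + 1 ≤ (y+2)^2 := by nlinarith
    have h1 : (y+2) + 1 ≤ (y+2)^4 :=
      le_trans h0 (Nat.pow_le_pow_right (by omega) (by norm_num))
    have h2 : (y+2) < 3 ^ (y+2) := Nat.lt_pow_self (by norm_num)
    calc 3 * (y+2) ≤ 3 * 3^(y+2) := by omega
      _ = 3^((y+2)+1) := by ring
      _ ≤ 3^((y+2)^4) := Nat.pow_le_pow_right (by norm_num) h1

/-- With `q₀ = 1`, `q_{k+1} = 3^{q_k⁴}` and signs `ε_ℓ = ±1`, the series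
`x = ∑_{ℓ≥1} ε_ℓ (4(ℓ−1))^{n−i}/q_ℓ` converges, and for all sufficiently
large `k`, the partial sum `p_k = q_k ∑_{ℓ=1}^k ε_ℓ (4(ℓ−1))^{n−i}/q_ℓ` is an
integer and `(4k)^{n−i} q_k/(2q_{k+1}) ≤ |q_k x − p_k| ≤ 2(4k)^{n−i} q_k/q_{k+1}`. -/
theorem liouville_type_approximation (q : ℕ → ℕ) (hq0 : q 0 = 1)
    (hq : ∀ k, q (k + 1) = 3 ^ (q k ^ 4))
    (ε : ℕ → ℝ) (hε : ∀ ℓ, ε ℓ = 1 ∨ ε ℓ = -1)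
    (n i : ℕ) (hn : 1 ≤ n) (hi1 : 1 ≤ i) (hin : i ≤ n) :
    let f : ℕ → ℝ := fun ℓ => ε (ℓ + 1) * ((4 * ℓ : ℝ)) ^ (n - i) / q (ℓ + 1)
    let x : ℝ := ∑' ℓ : ℕ, f ℓ
    let p : ℕ → ℝ := fun k => (q k : ℝ) * ∑ ℓ ∈ Finset.range k, f ℓ
    Summable f ∧ ∃ K : ℕ, ∀ k ≥ K,
      (∃ P : ℤ, p k = (P : ℝ)) ∧
      (4 * k : ℝ) ^ (n - i) * q k / (2 * q (k + 1)) ≤ |(q k : ℝ) * x - p k| ∧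
      |(q k : ℝ) * x - p k| ≤ 2 * (4 * k : ℝ) ^ (n - i) * q k / q (k + 1) := by
  classical
  intro f x p
  set m := n - i with hm
  have hfdef : ∀ ℓ, f ℓ = ε (ℓ + 1) * ((4 * ℓ : ℝ)) ^ m / q (ℓ + 1) := fun ℓ => rfl
  have hxdef : x = ∑' ℓ : ℕ, f ℓ := rfl
  have hpdef : ∀ k, p k = (q k : ℝ) * ∑ ℓ ∈ Finset.range k, f ℓ := fun k => rfl
  clear_value f x p
  -- basic facts about q
  have hq1 : ∀ k, 1 ≤ q k := by
    intro k
    cases k with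
    | zero => omega
    | succ j => rw [hq]; exact Nat.one_le_pow _ _ (by norm_num)
  have hq3 : ∀ k, 3 * q k ≤ q (k + 1) := by
    intro k; rw [hq]; exact aux_three_mul_le (q k)
  have hqk : ∀ k, k ≤ q k := by
    intro k
    induction k with
    | zero => omega
    | succ j ih => have := hq3 j; have := hq1 j; omega
  have hqmono : ∀ j k, j ≤ k → q j ≤ q k := by
    intro j k hjk
    induction k with
    | zero => have : j = 0 := by omega
              simp [this]
    | succ l ih =>
      rcases Nat.lt_or_ge j (l+1) with h | h
      · have h1 := ih (by omega); have h2 := hq3 l; have h3 := hq1 l; omega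
      · have : j = l + 1 := by omega
        simp [this]
  have hdvd : ∀ j k, j ≤ k → q j ∣ q k := by
    intro j k hjk
    induction k with
    | zero => have : j = 0 := by omega
              simp [this]
    | succ l ih =>
      rcases Nat.lt_or_ge j (l+1) with h | h
      · refine dvd_trans (ih (by omega)) ?_
        cases l with
        | zero => rw [hq0]; exact one_dvd _
        | succ l' =>
          rw [hq l', hq (l'+1)]
          exact pow_dvd_pow 3 (Nat.pow_le_pow_left (hqmono l' (l'+1) (by omega)) 4)
      · have : j = l + 1 := by omega
        simp [this]
  have hqgeom : ∀ k ℓ, 3 ^ ℓ * q k ≤ q (k + ℓ) := by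
    intro k ℓ
    induction ℓ with
    | zero => simp
    | succ j ih =>
      have h3 := hq3 (k + j)
      calc 3 ^ (j+1) * q k = 3 * (3 ^ j * q k) := by ring
        _ ≤ 3 * q (k + j) := by omega
        _ ≤ q (k + j + 1) := h3
  have hqpos : ∀ k, (0:ℝ) < q k := fun k => by exact_mod_cast hq1 k
  have hεabs : ∀ ℓ, |ε ℓ| = 1 := fun ℓ => by rcases hε ℓ with h | h <;> simp [h]
  have hfabs : ∀ ℓ, |f ℓ| = ((4 * ℓ : ℝ)) ^ m / q (ℓ + 1) := by
    intro ℓ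
    have h1 : (0:ℝ) ≤ ((4 * ℓ : ℝ)) ^ m := by positivity
    rw [hfdef, abs_div, abs_mul, hεabs, one_mul, abs_of_nonneg h1,
      abs_of_pos (hqpos (ℓ+1))]
  -- summability
  have hgeo : Summable (fun ℓ : ℕ => ((ℓ:ℝ)) ^ m * (1/3 : ℝ) ^ ℓ) :=
    summable_pow_mul_geometric_of_norm_lt_one m (by rw [Real.norm_eq_abs, abs_of_nonneg (by norm_num : (0:ℝ) ≤ 1/3)]; norm_num)
  have h3l : ∀ ℓ : ℕ, (3:ℕ) ^ ℓ ≤ q (ℓ + 1) := by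
    intro ℓ
    have := hqgeom 1 ℓ
    have h1 : 1 ≤ q 1 := hq1 1
    calc (3:ℕ)^ℓ = 3^ℓ * 1 := by ring
      _ ≤ 3^ℓ * q 1 := by exact Nat.mul_le_mul_left _ h1
      _ ≤ q (1 + ℓ) := this
      _ = q (ℓ + 1) := by rw [Nat.add_comm]
  have habs_le : ∀ ℓ : ℕ, |f ℓ| ≤ (4:ℝ)^m * ((ℓ:ℝ)^m * (1/3:ℝ)^ℓ) := by
    intro ℓ
    rw [hfabs]
    have h3 : ((3:ℝ))^ℓ ≤ (q (ℓ+1) : ℝ) := by exact_mod_cast h3l ℓ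
    have h3p : (0:ℝ) < (3:ℝ)^ℓ := by positivity
    calc ((4 * ℓ : ℝ)) ^ m / q (ℓ + 1) ≤ ((4 * ℓ : ℝ)) ^ m / (3:ℝ)^ℓ := by
          gcongr
      _ = (4:ℝ)^m * ((ℓ:ℝ)^m * (1/3:ℝ)^ℓ) := by
          rw [mul_pow, div_pow, one_pow]
          field_simp
  have hsumabs : Summable (fun ℓ => |f ℓ|) := by
    apply Summable.of_nonneg_of_le (fun ℓ => abs_nonneg _) habs_le
    exact hgeo.mul_left _
  have hsum : Summable f := summable_abs_iff.mp hsumabs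
  refine ⟨hsum, ?_⟩
  -- the shifted geometric constant
  have hCsum : Summable (fun ℓ : ℕ => ((ℓ:ℝ) + 1) ^ m * (1/3 : ℝ) ^ ℓ) := by
    have h1 : Summable (fun ℓ : ℕ => (((ℓ+1:ℕ)):ℝ) ^ m * (1/3 : ℝ) ^ (ℓ+1)) :=
      (summable_nat_add_iff (f := fun ℓ : ℕ => ((ℓ:ℝ)) ^ m * (1/3 : ℝ) ^ ℓ) 1).2 hgeo
    have h2 := h1.mul_left (3:ℝ)
    refine h2.congr (fun ℓ => ?_)
    push_cast
    ring
  set C : ℝ := ∑' ℓ : ℕ, ((ℓ:ℝ) + 1) ^ m * (1/3 : ℝ) ^ ℓ with hCdef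
  have hC0 : 0 ≤ C := tsum_nonneg (fun ℓ => by positivity)
  obtain ⟨N, hN⟩ := exists_nat_ge ((2:ℝ)^(m+1) * C)
  refine ⟨N + 1, fun k hk => ?_⟩
  have hk1 : 1 ≤ k := by omega
  -- integrality of p k
  have hint : ∃ P : ℤ, p k = (P : ℝ) := by
    refine ⟨∑ ℓ ∈ Finset.range k, (if ε (ℓ+1) = 1 then (1:ℤ) else -1) * (4*ℓ)^m *
      ((q k / q (ℓ+1) : ℕ) : ℤ), ?_⟩
    rw [hpdef, Finset.mul_sum, Int.cast_sum]
    refine Finset.sum_congr rfl (fun ℓ hℓ => ?_)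
    have hℓk : ℓ + 1 ≤ k := by
      have := Finset.mem_range.mp hℓ; omega
    have hdiv : ((q k / q (ℓ+1) : ℕ) : ℝ) = (q k : ℝ) / (q (ℓ+1) : ℝ) :=
      Nat.cast_div (hdvd (ℓ+1) k hℓk) (ne_of_gt (hqpos (ℓ+1)))
    have hdiv' : (((( q k / q (ℓ+1) : ℕ) : ℤ)) : ℝ) = (q k : ℝ) / (q (ℓ+1) : ℝ) := by
      rw [Int.cast_natCast, hdiv]
    rw [hfdef, Int.cast_mul, Int.cast_mul, hdiv']
    rcases hε (ℓ+1) with h | h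
    · rw [h, if_pos rfl]
      push_cast
      field_simp
    · have h1 : ε (ℓ+1) ≠ 1 := by rw [h]; norm_num
      rw [if_neg h1, h]
      push_cast
      field_simp
  refine ⟨hint, ?_⟩
  -- decomposition of the tail
  have htail0 : (q k : ℝ) * x - p k = (q k : ℝ) * ∑' ℓ : ℕ, f (ℓ + k) := by
    rw [hxdef, hpdef, ← hsum.sum_add_tsum_nat_add k]
    ring
  have hsum_k : Summable (fun ℓ => f (ℓ + k)) := (summable_nat_add_iff k).2 hsum
  have hsum_k1 : Summable (fun ℓ => f (ℓ + (k+1))) := (summable_nat_add_iff (k+1)).2 hsum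
  set t : ℝ := ∑' ℓ : ℕ, f (ℓ + (k + 1)) with htdef
  have hsplit : (∑' ℓ : ℕ, f (ℓ + k)) = f k + t := by
    have h := hsum_k.sum_add_tsum_nat_add 1
    have h2 : (fun ℓ : ℕ => f (ℓ + 1 + k)) = fun ℓ : ℕ => f (ℓ + (k+1)) := by
      funext ℓ; congr 1; omega
    rw [Finset.sum_range_one, h2] at h
    rw [← h, htdef]
    simp
  -- key quantities
  set A : ℝ := ((4 * k : ℝ)) ^ m with hAdef
  have hA0 : 0 ≤ A := by positivity
  have hfk : |f k| = A / q (k+1) := hfabs k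
  -- bounding the tail |t|
  have hterm : ∀ ℓ : ℕ, |f (ℓ + (k+1))| ≤
      (((4 * (k+1) : ℝ)) ^ m / q (k+2)) * (((ℓ:ℝ) + 1) ^ m * (1/3 : ℝ) ^ ℓ) := by
    intro ℓ
    rw [hfabs]
    have hden : ((3:ℝ))^ℓ * q (k+2) ≤ (q (ℓ + (k+1) + 1) : ℝ) := by
      have := hqgeom (k+2) ℓ
      have heq : k + 2 + ℓ = ℓ + (k+1) + 1 := by omega
      rw [heq] at this
      exact_mod_cast this
    have hcast : ((4 * ((ℓ + (k+1) : ℕ)) : ℝ)) = 4 * ((ℓ:ℝ) + ((k:ℝ)+1)) := by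
      push_cast; ring
    rw [hcast]
    have hnum : (4 * ((ℓ:ℝ) + ((k:ℝ)+1))) ^ m ≤ (4 * ((k:ℝ)+1)) ^ m * ((ℓ:ℝ) + 1) ^ m := by
      rw [← mul_pow]
      apply pow_le_pow_left₀ (by positivity)
      nlinarith [Nat.cast_nonneg (α := ℝ) ℓ, Nat.cast_nonneg (α := ℝ) k]
    calc (4 * ((ℓ:ℝ) + ((k:ℝ)+1))) ^ m / (q (ℓ + (k+1) + 1) : ℝ)
        ≤ (4 * ((ℓ:ℝ) + ((k:ℝ)+1))) ^ m / ((3:ℝ)^ℓ * q (k+2)) :=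
          div_le_div_of_nonneg_left (by positivity)
            (mul_pos (by positivity) (hqpos (k+2))) hden
      _ ≤ ((4 * ((k:ℝ)+1)) ^ m * ((ℓ:ℝ) + 1) ^ m) / ((3:ℝ)^ℓ * q (k+2)) :=
          (div_le_div_iff_of_pos_right (mul_pos (by positivity) (hqpos (k+2)))).mpr hnum
      _ = (((4 * (k+1) : ℝ)) ^ m / q (k+2)) * (((ℓ:ℝ) + 1) ^ m * (1/3 : ℝ) ^ ℓ) := by
          rw [div_pow, one_pow]
          rw [div_eq_mul_inv, div_eq_mul_inv, div_eq_mul_inv, mul_inv]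
          push_cast
          ring
  have ht_abs : |t| ≤ (((4 * (k+1) : ℝ)) ^ m / q (k+2)) * C := by
    have h1 : |t| ≤ ∑' ℓ : ℕ, |f (ℓ + (k+1))| := by
      simpa [Real.norm_eq_abs] using
        norm_tsum_le_tsum_norm (f := fun ℓ => f (ℓ + (k+1)))
          (by simpa [Real.norm_eq_abs] using hsum_k1.abs)
    have h2 : (∑' ℓ : ℕ, |f (ℓ + (k+1))|) ≤
        ∑' ℓ : ℕ, (((4 * (k+1) : ℝ)) ^ m / q (k+2)) * (((ℓ:ℝ) + 1) ^ m * (1/3 : ℝ) ^ ℓ) :=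
      Summable.tsum_le_tsum hterm hsum_k1.abs (hCsum.mul_left _)
    rw [tsum_mul_left] at h2
    exact le_trans h1 h2
  -- the crucial comparison
  have hNQ : (N : ℝ) * q (k+1) ≤ (q (k+2) : ℝ) := by
    have hq2 : 3 ≤ q (k+1) := by have := hq3 k; have := hq1 k; omega
    have h27 : 27 ≤ q (k+1) ^ 3 := by
      calc 27 = 3 ^ 3 := by norm_num
        _ ≤ q (k+1) ^ 3 := Nat.pow_le_pow_left hq2 3
    have hx4 : 2 * q (k+1) ≤ q (k+1) ^ 4 := by nlinarith [h27, hq1 (k+1)]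
    have hbig : q (k+1) * 3 ^ (k+1) ≤ q (k+2) := by
      rw [hq (k+1)]
      calc q (k+1) * 3 ^ (k+1)
          ≤ 3 ^ (q (k+1)) * 3 ^ (q (k+1)) := by
            apply Nat.mul_le_mul
            · exact le_of_lt (Nat.lt_pow_self (by norm_num))
            · exact Nat.pow_le_pow_right (by norm_num) (by have := hqk (k+1); omega)
        _ = 3 ^ (2 * q (k+1)) := by rw [← pow_add]; ring_nf
        _ ≤ 3 ^ (q (k+1) ^ 4) := Nat.pow_le_pow_right (by norm_num) hx4
    have h3k : N ≤ 3 ^ (k+1) := by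
      have h1 : k + 1 < 3 ^ (k+1) := Nat.lt_pow_self (by norm_num)
      omega
    have : N * q (k+1) ≤ q (k+2) := by
      calc N * q (k+1) ≤ 3 ^ (k+1) * q (k+1) := Nat.mul_le_mul_right _ h3k
        _ = q (k+1) * 3 ^ (k+1) := by ring
        _ ≤ q (k+2) := hbig
    exact_mod_cast this
  have hQ1 : (0:ℝ) < q (k+1) := hqpos (k+1)
  have hQ2 : (0:ℝ) < q (k+2) := hqpos (k+2)
  have hhalf : (((4 * (k+1) : ℝ)) ^ m / q (k+2)) * C ≤ A / (2 * q (k+1)) := by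
    rw [div_mul_eq_mul_div, div_le_div_iff₀ hQ2 (by positivity)]
    have hBA : ((4 * (k+1) : ℝ)) ^ m ≤ 2^m * A := by
      rw [hAdef, ← mul_pow]
      apply pow_le_pow_left₀ (by positivity)
      have : (1:ℝ) ≤ (k:ℝ) := by exact_mod_cast hk1
      nlinarith
    calc ((4 * (k+1) : ℝ)) ^ m * C * (2 * q (k+1))
        ≤ (2^m * A) * C * (2 * q (k+1)) := by gcongr
      _ = A * ((2^(m+1) * C) * q (k+1)) := by ring
      _ ≤ A * ((N:ℝ) * q (k+1)) := by gcongr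
      _ ≤ A * q (k+2) := by gcongr
  have ht_half : |t| ≤ A / (2 * q (k+1)) := le_trans ht_abs hhalf
  -- conclude
  have habs_eq : |(q k : ℝ) * x - p k| = (q k : ℝ) * |f k + t| := by
    rw [htail0, hsplit, abs_mul, abs_of_pos (hqpos k)]
  have hfk_eq : |f k| = A / q (k+1) := hfk
  have hlow : A / q (k+1) - A / (2 * q (k+1)) = A / (2 * q (k+1)) := by
    field_simp
    ring
  constructor
  · -- lower bound
    rw [habs_eq]
    have h1 : |f k| - |t| ≤ |f k + t| := by
      have := abs_add_le (f k + t) (-t)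
      simp only [add_neg_cancel_right, abs_neg] at this
      linarith
    have h2 : A / (2 * q (k+1)) ≤ |f k + t| := by
      rw [hfk_eq] at h1
      linarith [ht_half]
    calc ((4 * k : ℝ)) ^ m * q k / (2 * q (k+1)) = (q k : ℝ) * (A / (2 * q (k+1))) := by
          rw [hAdef]; ring
      _ ≤ (q k : ℝ) * |f k + t| := by
          apply mul_le_mul_of_nonneg_left h2 (le_of_lt (hqpos k))
  · -- upper bound
    rw [habs_eq]
    have h1 : |f k + t| ≤ |f k| + |t| := abs_add_le _ _
    have h2 : |f k + t| ≤ 2 * (A / q (k+1)) := by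
      rw [hfk_eq] at h1
      have h3 : A / (2 * q (k+1)) ≤ A / q (k+1) :=
        div_le_div_of_nonneg_left hA0 hQ1 (by linarith)
      linarith [ht_half]
    calc (q k : ℝ) * |f k + t| ≤ (q k : ℝ) * (2 * (A / q (k+1))) :=
          mul_le_mul_of_nonneg_left h2 (le_of_lt (hqpos k))
      _ = 2 * ((4 * k : ℝ)) ^ m * q k / q (k+1) := by rw [hAdef]; ring
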